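/- Let a_1,...,a_n be real numbers with ∑ a_i = 0, ∑ a_i² = a, and suppose |∑ a_i³| = (n−2)/√(n(n−1)) · a^{3/2} with a > 0. Then at least n−1 of the a_i are equal. -/

import Mathlib

lemma okumura_key (n : ℕ) (hn : 2 ≤ n) (a : Fin n → ℝ) (A : ℝ)
    (hA : 0 < A) (hsum : ∑ i, a i = 0) (hsq : ∑ i, (a i) ^ 2 = A)
    (heq : ∑ i, (a i) ^ 3 = (n - 2) / Real.sqrt (n * (n - 1)) * A ^ ((3 : ℝ) / 2)) :
    ∃ c : ℝ, n - 1 ≤ (Finset.univ.filter (fun i => a i = c)).card := by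
  have hn2 : (2:ℝ) ≤ (n:ℝ) := by exact_mod_cast hn
  have hnn : (0:ℝ) < (n:ℝ) * ((n:ℝ) - 1) := by nlinarith
  set b : ℝ := Real.sqrt (A / ((n:ℝ) * ((n:ℝ) - 1))) with hbdef
  have hbpos : 0 < b := Real.sqrt_pos.mpr (by positivity)
  have hb2 : b ^ 2 = A / ((n:ℝ) * ((n:ℝ) - 1)) := Real.sq_sqrt (by positivity)
  have hbA : (n:ℝ) * ((n:ℝ) - 1) * b ^ 2 = A := by
    rw [hb2]; field_simp; exact div_self (by linarith)
  -- Step 1: each a i ≤ (n-1) * b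
  have hle : ∀ i, a i ≤ ((n:ℝ) - 1) * b := by
    intro i
    have h1 : ∑ j ∈ Finset.univ.erase i, a j = - a i := by
      have := Finset.sum_erase_add Finset.univ a (Finset.mem_univ i)
      linarith [this.trans hsum]
    have h2 : ∑ j ∈ Finset.univ.erase i, (a j) ^ 2 = A - (a i) ^ 2 := by
      have := Finset.sum_erase_add Finset.univ (fun j => (a j)^2) (Finset.mem_univ i)
      simp only [hsq] at this
      linarith
    have hcs := sq_sum_le_card_mul_sum_sq (s := Finset.univ.erase i) (f := a)
    rw [h1, h2, Finset.card_erase_of_mem (Finset.mem_univ i)] at hcs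
    simp only [Finset.card_univ, Fintype.card_fin] at hcs
    have hcast : ((n - 1 : ℕ) : ℝ) = (n:ℝ) - 1 := by
      have : 1 ≤ n := le_trans (by norm_num) hn
      push_cast [Nat.cast_sub this]; ring
    rw [hcast] at hcs
    have hsq2 : (a i) ^ 2 ≤ (((n:ℝ) - 1) * b) ^ 2 := by nlinarith
    have hpos : 0 < ((n:ℝ) - 1) * b := mul_pos (by linarith) hbpos
    nlinarith [hsq2, hpos]
  -- Step 2: identity
  have hident : ∑ i, (a i + b) ^ 2 * (a i - ((n:ℝ) - 1) * b)
      = (∑ i, (a i) ^ 3) - ((n:ℝ) - 2) * b * A := by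
    have hexp : ∀ i : Fin n, (a i + b) ^ 2 * (a i - ((n:ℝ) - 1) * b)
        = (a i) ^ 3 + (3 - (n:ℝ)) * b * (a i) ^ 2 + (3 - 2 * (n:ℝ)) * b ^ 2 * (a i)
          + (-(((n:ℝ) - 1) * b ^ 3)) := fun i => by ring
    rw [Finset.sum_congr rfl (fun i _ => hexp i)]
    simp only [Finset.sum_add_distrib, ← Finset.mul_sum, hsum, hsq, Finset.sum_const,
      Finset.card_univ, Fintype.card_fin, nsmul_eq_mul]
    have : (n:ℝ) * -(((n:ℝ) - 1) * b ^ 3) = -(b * A) := by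
      have : (n:ℝ) * (((n:ℝ) - 1) * b ^ 3) = b * ((n:ℝ) * ((n:ℝ) - 1) * b ^ 2) := by ring
      rw [hbA] at this; linarith
    rw [this]; ring
  -- Step 3: rewrite RHS of heq
  have hrhs : ((n:ℝ) - 2) / Real.sqrt ((n:ℝ) * ((n:ℝ) - 1)) * A ^ ((3 : ℝ) / 2)
      = ((n:ℝ) - 2) * b * A := by
    have hA32 : A ^ ((3:ℝ)/2) = Real.sqrt A ^ 3 := by
      rw [Real.sqrt_eq_rpow, ← Real.rpow_natCast (A ^ ((1:ℝ)/2)) 3, ← Real.rpow_mul hA.le]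
      norm_num
    have hbeq : b = Real.sqrt A / Real.sqrt ((n:ℝ) * ((n:ℝ) - 1)) := by
      rw [hbdef, Real.sqrt_div hA.le]
    have hsA : Real.sqrt A ^ 2 = A := Real.sq_sqrt hA.le
    have h3 : Real.sqrt A ^ 3 = A * Real.sqrt A := by
      rw [pow_succ, hsA]
    rw [hA32, hbeq, h3]; ring
  rw [hrhs] at heq
  -- Step 4 & 5: each term zero
  have hnonpos : ∀ i ∈ Finset.univ, (a i + b) ^ 2 * (a i - ((n:ℝ) - 1) * b) ≤ 0 := by
    intro i _
    exact mul_nonpos_of_nonneg_of_nonpos (sq_nonneg _) (by linarith [hle i])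
  have hzero : ∀ i ∈ Finset.univ, (a i + b) ^ 2 * (a i - ((n:ℝ) - 1) * b) = 0 := by
    rw [← Finset.sum_eq_zero_iff_of_nonpos hnonpos, hident, heq]; ring
  have hdich : ∀ i : Fin n, a i = -b ∨ a i = ((n:ℝ) - 1) * b := by
    intro i
    rcases mul_eq_zero.mp (hzero i (Finset.mem_univ i)) with h | h
    · left; have := pow_eq_zero_iff (n := 2) (by norm_num) |>.mp h; linarith
    · right; linarith
  -- Step 6: counting
  refine ⟨-b, ?_⟩
  set S := Finset.univ.filter (fun i => a i = -b) with hS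
  set s := S.card with hs
  set T := Finset.univ.filter (fun i => ¬ a i = -b) with hT
  have hst : s + T.card = n := by
    rw [hs, hS, hT]
    rw [Finset.card_filter_add_card_filter_not]
    simp
  have hsumS : ∑ i ∈ S, a i = (s:ℝ) * (-b) := by
    rw [Finset.sum_congr rfl (fun i hi => (Finset.mem_filter.mp hi).2), Finset.sum_const,
      nsmul_eq_mul]
  have hsumT : ∑ i ∈ T, a i = (T.card : ℝ) * (((n:ℝ) - 1) * b) := by
    rw [Finset.sum_congr rfl (fun i hi => ?_), Finset.sum_const, nsmul_eq_mul]
    have hne := (Finset.mem_filter.mp hi).2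
    rcases hdich i with h | h
    · exact absurd h hne
    · exact h
  have hsplit : ∑ i ∈ S, a i + ∑ i ∈ T, a i = 0 := by
    rw [hS, hT, Finset.sum_filter_add_sum_filter_not]; exact hsum
  rw [hsumS, hsumT] at hsplit
  -- deduce T.card = 1
  have hsn : (s:ℝ) + (T.card:ℝ) = (n:ℝ) := by exact_mod_cast hst
  have h4 : ((T.card:ℝ) * ((n:ℝ) - 1) - (s:ℝ)) * b = 0 := by linear_combination hsplit
  have h5 : (T.card:ℝ) * ((n:ℝ) - 1) = (s:ℝ) := by
    rcases mul_eq_zero.mp h4 with h | h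
    · linarith
    · exact absurd h hbpos.ne'
  have hcast : ((T.card : ℝ)) * (n:ℝ) = 1 * (n:ℝ) := by linarith [h5, hsn]
  have hT1 : T.card = 1 := by
    have hn0 : (n:ℝ) ≠ 0 := by positivity
    have := mul_right_cancel₀ hn0 hcast
    exact_mod_cast this
  have : s = n - 1 := by omega
  omega

theorem okumura_equality_case (n : ℕ) (hn : 2 ≤ n) (a : Fin n → ℝ) (A : ℝ)
    (hA : 0 < A) (hsum : ∑ i, a i = 0) (hsq : ∑ i, (a i) ^ 2 = A)
    (heq : |∑ i, (a i) ^ 3| = (n - 2) / Real.sqrt (n * (n - 1)) * A ^ ((3 : ℝ) / 2)) :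
    ∃ c : ℝ, n - 1 ≤ (Finset.univ.filter (fun i => a i = c)).card := by
  rcases le_or_gt 0 (∑ i, (a i) ^ 3) with h | h
  · rw [abs_of_nonneg h] at heq
    exact okumura_key n hn a A hA hsum hsq heq
  · rw [abs_of_neg h] at heq
    have hcube : ∑ i, (-a i) ^ 3 = ((n:ℝ) - 2) / Real.sqrt ((n:ℝ) * ((n:ℝ) - 1)) * A ^ ((3 : ℝ) / 2) := by
      rw [← heq]
      have h3 : ∀ i : Fin n, (-a i) ^ 3 = -((a i) ^ 3) := fun i => by ring
      rw [Finset.sum_congr rfl (fun i _ => h3 i)]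
      exact Finset.sum_neg_distrib (f := fun i => (a i) ^ 3)
    obtain ⟨c, hc⟩ := okumura_key n hn (fun i => -a i) A hA
      (by simpa using congrArg Neg.neg hsum) (by simpa using hsq) hcube
    refine ⟨-c, ?_⟩
    have hfe : (Finset.univ.filter fun i => -a i = c) = (Finset.univ.filter fun i => a i = -c) := by
      apply Finset.filter_congr
      intro i _
      constructor
      · intro h1; linarith
      · intro h1; rw [h1]; ring
    rwa [hfe] at hc
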